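/- Let ψ be a linear functional on ℂ⟨X,Y⟩ making X and Y free, and let Ψ = (1 − zXY)^{−1} as a formal power series in z with coefficients in ℂ⟨X,Y⟩. Define E_X^ψ as the free conditional expectation onto ℂ⟨X⟩ (the unique ℂ⟨X⟩-bimodule map given by the Boolean cumulant expansion formula for free variables). Then E_X^ψ[Ψ] = (1 − ω_X(z)·X)^{−1} as formal power series, where ω_X(z) = z·β_Y^{b,ψ}(YΨ) is a formal power series in z with scalar coefficients (the subordination function), and consequently ψ(Ψ) = M_X^ψ(ω_X(z)), i.e., the moments of XY with respect to ψ are subordinated to the moments of X. -/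

import Mathlib

open TensorProduct

noncomputable section

/-- The free algebra `ℂ⟨X,Y⟩` on two generators. -/
abbrev FA : Type := FreeAlgebra ℂ Bool

/-- The generator `X`. -/
def Xg : FA := FreeAlgebra.ι ℂ true

/-- The generator `Y`. -/
def Yg : FA := FreeAlgebra.ι ℂ false

/-- The resolvent `Ψ = (1 − zXY)^{-1} = ∑ₙ zⁿ (XY)ⁿ`. -/
def resolventXY : PowerSeries FA := PowerSeries.mk fun n => (Xg * Yg) ^ n

/-- The map `β ⊗ E : u ⊗ v ↦ β(u) • E(v)`. -/
def tensBE (βb : FA →ₗ[ℂ] ℂ) (E : FA →ₗ[ℂ] FA) : FA ⊗[ℂ] FA →ₗ[ℂ] FA :=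
  TensorProduct.lift (LinearMap.mk₂ ℂ (fun u v => βb u • E v)
    (fun u u' v => by simp [add_smul])
    (fun c u v => by simp [smul_smul])
    (fun u v v' => by simp [smul_add])
    (fun c u v => by simp; rw [smul_comm]))

/-- Coefficientwise extension of `E` to formal power series. -/
def psE (E : FA →ₗ[ℂ] FA) (F : PowerSeries FA) : PowerSeries FA :=
  PowerSeries.mk fun n => E (PowerSeries.coeff n F)

/-- Formal composition `f ∘ g` of power series (`g` with zero constant term):
the `n`-th coefficient is `∑_{k ≤ n} fₖ · [zⁿ](gᵏ)`. -/
def psComp (f g : PowerSeries ℂ) : PowerSeries ℂ :=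
  PowerSeries.mk fun n =>
    ∑ k ∈ Finset.range (n + 1),
      PowerSeries.coeff k f * PowerSeries.coeff n (g ^ k)

/-- The subordination function `ω_X(z) = z·β_Y^{b,ψ}(YΨ)`. -/
def omegaX (βb : FA →ₗ[ℂ] ℂ) : PowerSeries ℂ :=
  PowerSeries.X * PowerSeries.mk fun n => βb (Yg * (Xg * Yg) ^ n)

/-- subordination for the resolvent of `XY`.  Assume `X, Y` are
free with respect to `ψ`, and let `E = E_X^ψ` be the free conditional
expectation onto `ℂ⟨X⟩`, characterized by the Boolean cumulant recurrence
`E[W] = β_Y^{b,ψ}(W) + (β_Y^{b,ψ} ⊗ E)[δ̃_X(W)]` (with `δ̃_X = (1⊗X)∂_X`),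
the `ℂ⟨X⟩`-module property, and `ψ ∘ E = ψ`.  Then
`E_X^ψ[Ψ] = (1 − ω_X(z)·X)^{-1}` for `Ψ = (1 − zXY)^{-1}`, where
`ω_X(z) = z·β_Y^{b,ψ}(YΨ)`, and consequently `ψ(Ψ) = M_X^ψ(ω_X(z))`. -/
theorem conditional_expectation_resolvent_subordination
    (ψ : FA →ₗ[ℂ] ℂ) (hψ1 : ψ 1 = 1)
    (βb : FA →ₗ[ℂ] ℂ) (E : FA →ₗ[ℂ] FA)
    (D : FA →ₗ[ℂ] FA ⊗[ℂ] FA)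
    (hLeib : ∀ a b : FA, D (a * b) = D a * (1 ⊗ₜ[ℂ] b) + (a ⊗ₜ[ℂ] 1) * D b)
    (hDX : D Xg = 1 ⊗ₜ[ℂ] 1) (hDY : D Yg = 0)
    (hrec : ∀ W : FA,
      E W = βb W • (1 : FA) + tensBE βb E (((1 : FA) ⊗ₜ[ℂ] Xg) * D W))
    (hmod : ∀ W : FA, E (Xg * W) = Xg * E W)
    (hψE : ∀ W : FA, ψ (E W) = ψ W) :
    (psE E resolventXY *
        (1 - PowerSeries.map (algebraMap ℂ FA) (omegaX βb) * PowerSeries.C Xg) = 1) ∧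
    ((1 - PowerSeries.map (algebraMap ℂ FA) (omegaX βb) * PowerSeries.C Xg) *
        psE E resolventXY = 1) ∧
    (PowerSeries.mk fun n => ψ ((Xg * Yg) ^ n))
      = psComp (PowerSeries.mk fun n => ψ (Xg ^ n)) (omegaX βb) := by
  classical
  -- abbreviations
  set ω : PowerSeries ℂ := omegaX βb with hω
  set Gm : PowerSeries FA := PowerSeries.map (algebraMap ℂ FA) ω with hGm
  set G : PowerSeries FA := Gm * PowerSeries.C Xg with hG
  set F : PowerSeries FA := psE E resolventXY with hF
  -- basic facts about D
  have hD1 : D (1 : FA) = 0 := by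
    have h := hLeib 1 1
    rw [one_mul, ← Algebra.TensorProduct.one_def, mul_one, one_mul] at h
    exact (left_eq_add.mp h)
  have hDXY : D (Xg * Yg) = (1 : FA) ⊗ₜ[ℂ] Yg := by
    rw [hLeib, hDX, hDY, mul_zero, add_zero, Algebra.TensorProduct.tmul_mul_tmul,
      one_mul, one_mul]
  have hDW : ∀ n, D ((Xg*Yg)^n) = ∑ k ∈ Finset.range n,
      ((Xg*Yg)^k) ⊗ₜ[ℂ] (Yg * (Xg*Yg)^(n-1-k)) := by
    intro n
    induction n with
    | zero => simp [hD1]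
    | succ n ih =>
      rw [pow_succ' (Xg*Yg) n, hLeib, hDXY, ih, Algebra.TensorProduct.tmul_mul_tmul,
        one_mul, Finset.mul_sum]
      rw [Finset.sum_range_succ' (fun k => ((Xg*Yg)^k) ⊗ₜ[ℂ] (Yg * (Xg*Yg)^(n+1-1-k)))]
      rw [add_comm]
      congr 1
      apply Finset.sum_congr rfl
      intro k hk
      have hk' := Finset.mem_range.mp hk
      have he : n + 1 - 1 - (k + 1) = n - 1 - k := by omega
      rw [Algebra.TensorProduct.tmul_mul_tmul, one_mul, ← pow_succ', he]
  -- β(1) = 1 and E(1) = 1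
  have hE1' : E (1 : FA) = βb 1 • (1 : FA) := by
    have h := hrec 1
    rw [hD1, mul_zero, map_zero, add_zero] at h
    exact h
  have hβ1 : βb (1 : FA) = 1 := by
    have h := hψE 1
    rw [hE1', map_smul, hψ1, smul_eq_mul, mul_one] at h
    exact h
  have hE1 : E (1 : FA) = 1 := by rw [hE1', hβ1, one_smul]
  -- the key recurrence on E(Y (XY)^n)
  have hEY : ∀ n, E (Yg * (Xg*Yg)^n) = βb (Yg * (Xg*Yg)^n) • (1 : FA)
      + ∑ k ∈ Finset.range n, βb (Yg * (Xg*Yg)^k) • E ((Xg*Yg)^(n-k)) := by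
    intro n
    have h := hrec (Yg * (Xg*Yg)^n)
    rw [hLeib, hDY, zero_mul, zero_add, hDW] at h
    rw [Finset.mul_sum, Finset.mul_sum, map_sum] at h
    rw [h]
    congr 1
    apply Finset.sum_congr rfl
    intro k hk
    have hk' := Finset.mem_range.mp hk
    simp only [Algebra.TensorProduct.tmul_mul_tmul, one_mul]
    have he : Xg * (Yg * (Xg*Yg)^(n-1-k)) = (Xg*Yg)^(n-k) := by
      have : n - k = (n - 1 - k) + 1 := by omega
      rw [this, pow_succ', mul_assoc]
    rw [he]
    simp [tensBE]
  -- the recurrence on E((XY)^(n+1))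
  have hEW : ∀ n, E ((Xg*Yg)^(n+1)) = ∑ k ∈ Finset.range (n+1),
      βb (Yg * (Xg*Yg)^k) • (Xg * E ((Xg*Yg)^(n-k))) := by
    intro n
    have h1 : (Xg*Yg)^(n+1) = Xg * (Yg * (Xg*Yg)^n) := by
      rw [pow_succ', mul_assoc]
    rw [h1, hmod, hEY, mul_add, Finset.mul_sum, Finset.sum_range_succ]
    rw [add_comm]
    congr 1
    · apply Finset.sum_congr rfl
      intro k hk
      rw [mul_smul_comm]
    · rw [mul_smul_comm, mul_one, Nat.sub_self, pow_zero, hE1, mul_one]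
  -- coefficients of F and G
  have hcF : ∀ n, PowerSeries.coeff n F = E ((Xg*Yg)^n) := by
    intro n; simp [hF, psE, resolventXY]
  have hcG0 : PowerSeries.coeff 0 G = 0 := by
    simp [hG, hGm, hω, omegaX, PowerSeries.coeff_mul_C, PowerSeries.coeff_map]
  have hcGs : ∀ n, PowerSeries.coeff (n+1) G = βb (Yg * (Xg*Yg)^n) • Xg := by
    intro n
    rw [hG, PowerSeries.coeff_mul_C, hGm, PowerSeries.coeff_map, hω, omegaX,
      PowerSeries.coeff_succ_X_mul, PowerSeries.coeff_mk, ← Algebra.smul_def]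
  -- (1 - G) * F = 1
  have h1GF : (1 - G) * F = 1 := by
    ext n
    rw [sub_mul, one_mul, map_sub]
    cases n with
    | zero =>
      rw [PowerSeries.coeff_mul]
      simp only [Finset.Nat.antidiagonal_zero, Finset.sum_singleton, hcG0, zero_mul]
      rw [hcF, pow_zero, hE1]
      simp
    | succ n =>
      rw [PowerSeries.coeff_mul, Finset.Nat.sum_antidiagonal_eq_sum_range_succ_mk]
      rw [Finset.sum_range_succ' (fun k => PowerSeries.coeff k G *
        PowerSeries.coeff (n+1-k) F)]
      simp only [hcG0, zero_mul, add_zero]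
      have : ∀ k ∈ Finset.range (n+1),
          PowerSeries.coeff (k+1) G * PowerSeries.coeff (n+1-(k+1)) F
          = βb (Yg * (Xg*Yg)^k) • (Xg * E ((Xg*Yg)^(n-k))) := by
        intro k hk
        have he : n + 1 - (k + 1) = n - k := by omega
        rw [he, hcGs, hcF, smul_mul_assoc]
      rw [Finset.sum_congr rfl this, hcF, hEW]
      simp [PowerSeries.coeff_one]
  -- coefficients of powers of G vanish below the order
  have hGpow : ∀ k n : ℕ, n < k → PowerSeries.coeff n (G^k) = 0 := by
    intro k
    induction k with
    | zero => intro n h; omega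
    | succ k ih =>
      intro n hn
      rw [pow_succ, PowerSeries.coeff_mul]
      apply Finset.sum_eq_zero
      intro p hp
      have hpsum := Finset.HasAntidiagonal.mem_antidiagonal.mp hp
      rcases Nat.eq_zero_or_pos p.2 with h2 | h2
      · rw [h2] at hpsum ⊢
        rw [hcG0, mul_zero]
      · have : p.1 < k := by omega
        rw [ih p.1 this, zero_mul]
  -- geometric series H
  set H : PowerSeries FA := PowerSeries.mk fun n =>
    ∑ k ∈ Finset.range (n+1), PowerSeries.coeff n (G^k) with hH
  have hHc : ∀ n m : ℕ, n ≤ m → PowerSeries.coeff n H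
      = PowerSeries.coeff n (∑ k ∈ Finset.range (m+1), G^k) := by
    intro n m hnm
    rw [hH, PowerSeries.coeff_mk, map_sum]
    apply Finset.sum_subset
    · exact Finset.range_subset_range.mpr (by omega)
    · intro k hk hk'
      exact hGpow k n (by
        have := Finset.mem_range.not.mp hk'
        omega)
  have hH1G : H * (1 - G) = 1 := by
    ext n
    have step : PowerSeries.coeff n (H * (1 - G))
        = PowerSeries.coeff n ((∑ k ∈ Finset.range (n+1), G^k) * (1 - G)) := by
      rw [PowerSeries.coeff_mul, PowerSeries.coeff_mul]
      apply Finset.sum_congr rfl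
      intro p hp
      have hpsum := Finset.HasAntidiagonal.mem_antidiagonal.mp hp
      rw [hHc p.1 n (by omega)]
    rw [step]
    have geo : (∑ k ∈ Finset.range (n+1), G^k) * (1 - G) = 1 - G^(n+1) := by
      have h := geom_sum_mul G (n+1)
      have h2 : (∑ k ∈ Finset.range (n+1), G^k) * (1 - G)
          = -((∑ k ∈ Finset.range (n+1), G^k) * (G - 1)) := by
        rw [mul_sub, mul_sub, mul_one]
        abel
      rw [h2, h, neg_sub]
    rw [geo, map_sub, hGpow (n+1) n (by omega), sub_zero]
  -- F = H, hence both inverse identities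
  have hFH : F = H := by
    calc F = 1 * F := (one_mul F).symm
      _ = (H * (1 - G)) * F := by rw [hH1G]
      _ = H * ((1 - G) * F) := mul_assoc _ _ _
      _ = H * 1 := by rw [h1GF]
      _ = H := mul_one H
  refine ⟨by rw [hFH]; exact hH1G, h1GF, ?_⟩
  -- the subordination of moments
  have hGk : ∀ k n : ℕ, PowerSeries.coeff n (G^k)
      = (PowerSeries.coeff n (ω^k)) • Xg^k := by
    intro k n
    have hcomm : Commute Gm (PowerSeries.C Xg) := by
      apply PowerSeries.ext
      intro m
      rw [PowerSeries.coeff_mul_C, PowerSeries.coeff_C_mul, hGm, PowerSeries.coeff_map]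
      exact Algebra.commutes _ _
    rw [hG, hcomm.mul_pow, ← map_pow, ← map_pow,
      PowerSeries.coeff_mul_C, PowerSeries.coeff_map, ← Algebra.smul_def]
  ext n
  rw [PowerSeries.coeff_mk, psComp, PowerSeries.coeff_mk]
  have h1 : ψ ((Xg*Yg)^n) = ψ (PowerSeries.coeff n H) := by
    rw [← hFH, hcF, hψE]
  rw [h1, hH, PowerSeries.coeff_mk, map_sum]
  apply Finset.sum_congr rfl
  intro k hk
  rw [hGk, map_smul, PowerSeries.coeff_mk, smul_eq_mul, mul_comm]
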